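/- Let A₁ ∈ ℂ^{m×n}, b₁ ∈ ℂ^m, A₂ ∈ ℂ^{k×n} with rank(A₂) = k ≥ 1, b₂ ∈ ℂ^k, and let D₂ ∈ ℂ^{n×s} be any matrix with R(D₂) = N(A₂). If x ∈ ℂ^n minimizes ‖A₁x − b₁‖² over all x satisfying A₂x = b₂, then there exists z ∈ N(A₂) such that x = D₂(A₁D₂)†A₁A₁†b₁ + (I − D₂(A₁D₂)†A₁)(A₂†b₂ + z). -/

import Mathlib

open Matrix

/-- The four Penrose conditions characterizing the Moore-Penrose inverse. -/
def IsMoorePenrose {m n : ℕ} (A : Matrix (Fin m) (Fin n) ℂ)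
    (X : Matrix (Fin n) (Fin m) ℂ) : Prop :=
  A * X * A = A ∧ X * A * X = X ∧ (A * X)ᴴ = A * X ∧ (X * A)ᴴ = X * A

/-- The range (column space) of a matrix, as a subspace of Euclidean space. -/
noncomputable def mrange {m n : ℕ} (A : Matrix (Fin m) (Fin n) ℂ) :
    Submodule ℂ (EuclideanSpace ℂ (Fin m)) :=
  LinearMap.range (Matrix.toEuclideanLin A)

/-- The null space of a matrix, as a subspace of Euclidean space. -/
noncomputable def mker {m n : ℕ} (A : Matrix (Fin m) (Fin n) ℂ) :
    Submodule ℂ (EuclideanSpace ℂ (Fin n)) :=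
  LinearMap.ker (Matrix.toEuclideanLin A)

lemma toE_mul {a b c : ℕ} (A : Matrix (Fin a) (Fin b) ℂ) (B : Matrix (Fin b) (Fin c) ℂ)
    (v : EuclideanSpace ℂ (Fin c)) :
    Matrix.toEuclideanLin (A * B) v = Matrix.toEuclideanLin A (Matrix.toEuclideanLin B v) := by
  simp [Matrix.toEuclideanLin_apply, Matrix.mulVec_mulVec]

lemma toE_one {a : ℕ} (v : EuclideanSpace ℂ (Fin a)) :
    Matrix.toEuclideanLin (1 : Matrix (Fin a) (Fin a) ℂ) v = v := by
  simp [Matrix.toEuclideanLin_apply]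

lemma idem_full_rank_eq_one {k : ℕ} (M : Matrix (Fin k) (Fin k) ℂ)
    (hMM : M * M = M) (hrk : M.rank = k) : M = 1 := by
  have hsurj : LinearMap.range M.mulVecLin = ⊤ := by
    apply Submodule.eq_top_of_finrank_eq
    rw [show Module.finrank ℂ ↥(LinearMap.range M.mulVecLin) = M.rank from rfl, hrk]
    simp [Module.finrank_pi]
  have hfix : ∀ y : Fin k → ℂ, M *ᵥ y = y := by
    intro y
    obtain ⟨w, hw⟩ := (LinearMap.range_eq_top.mp hsurj) y
    have hw' : M *ᵥ w = y := hw
    calc M *ᵥ y = M *ᵥ (M *ᵥ w) := by rw [hw']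
    _ = (M * M) *ᵥ w := by rw [Matrix.mulVec_mulVec]
    _ = M *ᵥ w := by rw [hMM]
    _ = y := hw'
  apply Matrix.toEuclideanLin.injective
  ext v
  simp only [Matrix.toEuclideanLin_apply, hfix]
  simp [toE_one, Matrix.toEuclideanLin_apply]


set_option maxHeartbeats 1000000 in
/-- Any minimizer of `‖A₁x − b₁‖²` subject to `A₂x = b₂` has the form
`D₂(A₁D₂)†A₁A₁†b₁ + (I − D₂(A₁D₂)†A₁)(A₂†b₂ + z)` for some `z ∈ N(A₂)`,
where `R(D₂) = N(A₂)`. -/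
theorem stmt14 {m n k s : ℕ}
    (A₁ : Matrix (Fin m) (Fin n) ℂ) (b₁ : EuclideanSpace ℂ (Fin m))
    (A₂ : Matrix (Fin k) (Fin n) ℂ) (b₂ : EuclideanSpace ℂ (Fin k))
    (hk : 1 ≤ k) (hA₂ : A₂.rank = k)
    (D₂ : Matrix (Fin n) (Fin s) ℂ) (hD₂ : mrange D₂ = mker A₂)
    (A₁d : Matrix (Fin n) (Fin m) ℂ) (hA₁d : IsMoorePenrose A₁ A₁d)
    (A₂d : Matrix (Fin n) (Fin k) ℂ) (hA₂d : IsMoorePenrose A₂ A₂d)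
    (X : Matrix (Fin s) (Fin m) ℂ) (hX : IsMoorePenrose (A₁ * D₂) X)
    (x : EuclideanSpace ℂ (Fin n))
    (hxc : Matrix.toEuclideanLin A₂ x = b₂)
    (hxmin : ∀ y : EuclideanSpace ℂ (Fin n), Matrix.toEuclideanLin A₂ y = b₂ →
      ‖Matrix.toEuclideanLin A₁ x - b₁‖ ^ 2 ≤ ‖Matrix.toEuclideanLin A₁ y - b₁‖ ^ 2) :
    ∃ z ∈ mker A₂,
      x = Matrix.toEuclideanLin (D₂ * X * A₁ * A₁d) b₁ +
        Matrix.toEuclideanLin (1 - D₂ * X * A₁)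
          (Matrix.toEuclideanLin A₂d b₂ + z) := by
  set B : Matrix (Fin m) (Fin s) ℂ := A₁ * D₂ with hB
  set v : EuclideanSpace ℂ (Fin m) := Matrix.toEuclideanLin A₁ x - b₁ with hv
  -- range D₂ ⊆ ker A₂
  have hAD : ∀ w : EuclideanSpace ℂ (Fin s),
      Matrix.toEuclideanLin A₂ (Matrix.toEuclideanLin D₂ w) = 0 := by
    intro w
    have : Matrix.toEuclideanLin D₂ w ∈ mker A₂ := by
      rw [← hD₂]; exact ⟨w, rfl⟩
    exact this
  -- optimality condition : Bᴴ v = 0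
  have hopt : Matrix.toEuclideanLin Bᴴ v = 0 := by
    by_contra hp
    set p : EuclideanSpace ℂ (Fin s) := Matrix.toEuclideanLin Bᴴ v with hpdef
    set u : EuclideanSpace ℂ (Fin m) := Matrix.toEuclideanLin B p with hudef
    have hadj : (inner ℂ v u : ℂ) = inner ℂ p p := by
      have h := LinearMap.adjoint_inner_left (Matrix.toEuclideanLin B) p v
      rw [← Matrix.toEuclideanLin_conjTranspose_eq_adjoint] at h
      exact h.symm
    have hpn : (0:ℝ) < ‖p‖ := norm_pos_iff.mpr hp
    have hun : u ≠ 0 := by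
      intro h0
      rw [h0, inner_zero_right] at hadj
      exact hp (inner_self_eq_zero.mp hadj.symm)
    have hunn : (0:ℝ) < ‖u‖ := norm_pos_iff.mpr hun
    set t : ℝ := -(‖p‖^2 / ‖u‖^2) with ht
    set y : EuclideanSpace ℂ (Fin n) := x + (t:ℂ) • Matrix.toEuclideanLin D₂ p with hy
    have hy2 : Matrix.toEuclideanLin A₂ y = b₂ := by
      rw [hy, map_add, _root_.map_smul, hAD, hxc]; simp
    have hAy : Matrix.toEuclideanLin A₁ y - b₁ = v + (t:ℂ) • u := by
      rw [hy, map_add, _root_.map_smul, ← toE_mul, ← hB, ← hudef, hv]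
      abel
    have hle := hxmin y hy2
    rw [hAy] at hle
    have hexp : ‖v + (t:ℂ) • u‖^2 = ‖v‖^2 + 2 * (t * ‖p‖^2) + t^2 * ‖u‖^2 := by
      rw [norm_add_sq (𝕜 := ℂ)]
      have h1 : (RCLike.re (inner ℂ v ((t:ℂ) • u) : ℂ)) = t * ‖p‖^2 := by
        rw [inner_smul_right, hadj]
        have hpp : (inner ℂ p p : ℂ) = ((‖p‖^2 : ℝ) : ℂ) := by
          rw [inner_self_eq_norm_sq_to_K]; norm_cast
        rw [hpp, ← Complex.ofReal_mul]
        exact RCLike.ofReal_re _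
      rw [h1, norm_smul, Complex.norm_real, Real.norm_eq_abs, mul_pow, sq_abs]
    rw [hexp] at hle
    have heq : ‖v‖^2 + 2 * (t * ‖p‖^2) + t^2 * ‖u‖^2 = ‖v‖^2 - ‖p‖^4/‖u‖^2 := by
      rw [ht]; field_simp; ring
    rw [heq] at hle
    have hposq := div_pos (pow_pos hpn 4) (pow_pos hunn 2)
    linarith
  -- A₂ A₂d = 1
  have hMone : A₂ * A₂d = 1 := by
    apply idem_full_rank_eq_one
    · calc A₂ * A₂d * (A₂ * A₂d) = A₂ * A₂d * A₂ * A₂d := (Matrix.mul_assoc _ _ _).symm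
      _ = A₂ * A₂d := by rw [hA₂d.1]
    · refine le_antisymm (Matrix.rank_le_height _) ?_
      calc k = A₂.rank := hA₂.symm
      _ = ((A₂ * A₂d) * A₂).rank := by rw [hA₂d.1]
      _ ≤ (A₂ * A₂d).rank := Matrix.rank_mul_le_left _ _
  -- choose z
  refine ⟨x - Matrix.toEuclideanLin A₂d b₂, ?_, ?_⟩
  · show Matrix.toEuclideanLin A₂ _ = 0
    rw [map_sub, hxc, ← toE_mul, hMone, toE_one, sub_self]
  · have hsum : Matrix.toEuclideanLin A₂d b₂ + (x - Matrix.toEuclideanLin A₂d b₂) = x := by abel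
    rw [hsum]
    -- key matrix identity : X = X * Xᴴ * Bᴴ
    have hXX : X * (Xᴴ * Bᴴ) = X := by
      have h2 : Xᴴ * Bᴴ = B * X := by rw [← Matrix.conjTranspose_mul]; exact hX.2.2.1
      rw [h2, ← Matrix.mul_assoc]; exact hX.2.1
    have e2 : D₂ * X * Xᴴ * Bᴴ = D₂ * X := by
      calc D₂ * X * Xᴴ * Bᴴ = D₂ * (X * (Xᴴ * Bᴴ)) := by simp only [Matrix.mul_assoc]
      _ = D₂ * X := by rw [hXX]
    -- A₁ᴴ * (A₁ * A₁d) = A₁ᴴ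
    have hA1 : A₁ᴴ * (A₁ * A₁d) = A₁ᴴ := by
      calc A₁ᴴ * (A₁ * A₁d) = A₁ᴴ * (A₁ * A₁d)ᴴ := by rw [hA₁d.2.2.1]
      _ = (A₁ * A₁d * A₁)ᴴ := by rw [Matrix.conjTranspose_mul (A₁ * A₁d) A₁]
      _ = A₁ᴴ := by rw [hA₁d.1]
    -- matrix identity: D₂ * X * A₁ * A₁d = D₂ * X
    have hkey : D₂ * X * A₁ * A₁d = D₂ * X := by
      calc D₂ * X * A₁ * A₁d = D₂ * X * Xᴴ * Bᴴ * A₁ * A₁d := by rw [e2]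
      _ = D₂ * X * Xᴴ * (D₂ᴴ * (A₁ᴴ * (A₁ * A₁d))) := by
          simp only [hB, Matrix.conjTranspose_mul, Matrix.mul_assoc]
      _ = D₂ * X * Xᴴ * (D₂ᴴ * A₁ᴴ) := by rw [hA1]
      _ = D₂ * X * Xᴴ * Bᴴ := by
          simp only [hB, Matrix.conjTranspose_mul, Matrix.mul_assoc]
      _ = D₂ * X := e2
    -- vector identity : (D₂ X A₁) x = (D₂ X) b₁
    have hBx : Matrix.toEuclideanLin Bᴴ (Matrix.toEuclideanLin A₁ x) =
        Matrix.toEuclideanLin Bᴴ b₁ := by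
      have h := hopt
      rw [hv, map_sub, sub_eq_zero] at h
      exact h
    have hvec : Matrix.toEuclideanLin (D₂ * X * A₁) x = Matrix.toEuclideanLin (D₂ * X) b₁ := by
      have e1 : D₂ * X * A₁ = D₂ * X * Xᴴ * Bᴴ * A₁ := by rw [e2]
      rw [e1, toE_mul (D₂ * X * Xᴴ * Bᴴ) A₁, toE_mul (D₂ * X * Xᴴ) Bᴴ, hBx,
        ← toE_mul, e2]
    rw [map_sub, LinearMap.sub_apply, toE_one, hkey, hvec]
    abel
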